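/- Let p and q be distinct equal-length words over a finite alphabet whose sets of proper borders are equal. If w avoids p and L(w) is obtained by replacing the leftmost occurrence of q in w with p, then this newly inserted occurrence of p is the rightmost occurrence of p in L(w); consequently R(L(w)) = w, where R replaces the rightmost occurrence of p with q. -/

import Mathlib

open List

/-- A nonempty word `x` is a border of `p` if it is both a prefix and a suffix of `p`. -/
def Border {α : Type*} (x p : List α) : Prop := x ≠ [] ∧ x <+: p ∧ x <:+ p

/-- A proper border is a border different from the word itself. -/
def ProperBorder {α : Type*} (x p : List α) : Prop := Border x p ∧ x ≠ p

/-- The border length set of `p`. -/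
def borderLengths {α : Type*} (p : List α) : Set ℕ :=
  {n | ∃ x, Border x p ∧ x.length = n}

/-- `replL q p w` replaces the leftmost contiguous occurrence of `q` in `w` by `p`
(identity if there is no occurrence). -/
def replL {α : Type*} [DecidableEq α] (q p : List α) : List α → List α
  | [] => []
  | a :: w => if q <+: (a :: w) then p ++ (a :: w).drop q.length else a :: replL q p w

/-- `replR p q w` replaces the rightmost contiguous occurrence of `p` in `w` by `q`
(identity if there is no occurrence). -/
def replR {α : Type*} [DecidableEq α] (p q : List α) : List α → List α
  | [] => []
  | a :: w =>
    if p <:+: w then a :: replR p q w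
    else if p <+: (a :: w) then q ++ (a :: w).drop p.length
    else a :: w

/-- `phiL q p w` iterates `replL q p` a minimal number of times so that no occurrence
of `q` remains (if such an iterate exists). -/
noncomputable def phiL {α : Type*} [DecidableEq α] (q p : List α) (w : List α) : List α :=
  (replL q p)^[sInf {i | ¬ q <:+: (replL q p)^[i] w}] w

/-- `phiR p q w` iterates `replR p q` a minimal number of times so that no occurrence
of `p` remains (if such an iterate exists). -/
noncomputable def phiR {α : Type*} [DecidableEq α] (p q : List α) (w : List α) : List α :=
  (replR p q)^[sInf {j | ¬ p <:+: (replR p q)^[j] w}] w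

lemma infix_iff_exists_drop' {α : Type*} {p w : List α} :
    p <:+: w ↔ ∃ j, p <+: w.drop j := by
  constructor
  · rintro ⟨s, t, rfl⟩
    refine ⟨s.length, t, ?_⟩
    rw [append_assoc, drop_left]
  · rintro ⟨j, h⟩
    exact h.isInfix.trans (w.drop_suffix j).isInfix

lemma suffix_eq_drop' {α : Type*} {s l : List α} (h : s <:+ l) :
    s = l.drop (l.length - s.length) := by
  obtain ⟨t, rfl⟩ := h
  simp

lemma replL_eq' {α : Type*} [DecidableEq α] (p : List α) {q : List α} (hq : q ≠ []) :
    ∀ (w : List α) (i : ℕ), q <+: w.drop i → (∀ j, q <+: w.drop j → i ≤ j) →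
    replL q p w = w.take i ++ p ++ w.drop (i + q.length) := by
  intro w
  induction w with
  | nil => intro i hi _; rw [drop_nil] at hi; exact absurd (prefix_nil.mp hi) hq
  | cons a w ih =>
    intro i hi hmin
    cases i with
    | zero =>
      simp only [drop_zero] at hi
      rw [replL, if_pos hi]
      simp
    | succ i' =>
      have h0 : ¬ q <+: (a :: w) := fun h => by
        have := hmin 0 (by simpa using h); omega
      rw [replL, if_neg h0]
      have hi' : q <+: w.drop i' := by simpa using hi
      have hmin' : ∀ j, q <+: w.drop j → i' ≤ j := fun j hj => by
        have := hmin (j + 1) (by simpa using hj); omega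
      rw [ih i' hi' hmin']
      have h1 : i' + 1 + q.length = (i' + q.length) + 1 := by omega
      rw [h1]
      simp

lemma replR_eq' {α : Type*} [DecidableEq α] (q : List α) {p : List α} (hp : p ≠ []) :
    ∀ (u : List α) (i : ℕ), p <+: u.drop i → (∀ j, p <+: u.drop j → j ≤ i) →
    replR p q u = u.take i ++ q ++ u.drop (i + p.length) := by
  intro u
  induction u with
  | nil => intro i hi _; rw [drop_nil] at hi; exact absurd (prefix_nil.mp hi) hp
  | cons a u ih =>
    intro i hi hmax
    cases i with
    | zero =>
      have hninf : ¬ p <:+: u := by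
        rw [infix_iff_exists_drop']
        rintro ⟨j, hj⟩
        have := hmax (j + 1) (by simpa using hj); omega
      simp only [drop_zero] at hi
      rw [replR, if_neg hninf, if_pos hi]
      simp
    | succ i' =>
      have hi' : p <+: u.drop i' := by simpa using hi
      have hinf : p <:+: u := infix_iff_exists_drop'.mpr ⟨i', hi'⟩
      rw [replR, if_pos hinf]
      have hmax' : ∀ j, p <+: u.drop j → j ≤ i' := fun j hj => by
        have := hmax (j + 1) (by simpa using hj); omega
      rw [ih i' hi' hmax']
      have h1 : i' + 1 + p.length = (i' + p.length) + 1 := by omega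
      rw [h1]
      simp

/-- If `p ≠ q` have equal length and equal proper border sets, `w` avoids `p` and contains
`q`, and `i` is the index of the leftmost occurrence of `q` in `w`, then the inserted
occurrence of `p` in `replL q p w` is its rightmost occurrence of `p`; consequently
`replR p q (replL q p w) = w`. -/
theorem stmt_9 {α : Type*} [Fintype α] [DecidableEq α] {p q w : List α}
    (hne : p ≠ q) (hlen : p.length = q.length)
    (hpb : {x | ProperBorder x p} = {x | ProperBorder x q})
    (hw : ¬ p <:+: w) (hq : q <:+: w)
    (i : ℕ) (hi : q <+: w.drop i) (hmin : ∀ j, q <+: w.drop j → i ≤ j) :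
    replL q p w = w.take i ++ p ++ w.drop (i + q.length) ∧
    p <+: (replL q p w).drop i ∧
    (∀ j, p <+: (replL q p w).drop j → j ≤ i) ∧
    replR p q (replL q p w) = w := by
  have hq0 : q ≠ [] := by
    intro h; subst h
    exact hne (length_eq_zero_iff.mp (by simpa using hlen))
  have hp0 : p ≠ [] := by
    intro h; apply hq0
    apply length_eq_zero_iff.mp; rw [← hlen, h]; rfl
  set n := q.length with hn
  have hplen : p.length = n := hlen
  have part1 : replL q p w = w.take i ++ p ++ w.drop (i + n) :=
    replL_eq' p hq0 w i hi hmin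
  have hiw : i < w.length := by
    by_contra h; push_neg at h
    rw [drop_eq_nil_of_le h] at hi
    exact hq0 (prefix_nil.mp hi)
  have htakelen : (w.take i).length = i := by
    rw [length_take]; omega
  obtain ⟨t, ht⟩ := hi
  have hdrop2 : w.drop (i + n) = t := by
    rw [(drop_drop (i := n) (j := i) (l := w)).symm, ← ht, hn, drop_left]
  have hdropi : w.drop i = q ++ w.drop (i + n) := by rw [hdrop2, ht]
  have hLdrop_ge : ∀ j, i + n ≤ j → (replL q p w).drop j = w.drop j := by
    intro j hj
    rw [part1, drop_append, drop_append]
    have h1 : ((w.take i).drop j : List α) = [] := drop_eq_nil_of_le (by omega)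
    have h2' : (p.drop (j - (w.take i).length) : List α) = [] :=
      drop_eq_nil_of_le (by rw [htakelen, hplen]; omega)
    rw [h1, h2', nil_append, nil_append, drop_drop]
    congr 1
    rw [length_append, htakelen, hplen]; omega
  have hLdropi : (replL q p w).drop i = p ++ w.drop (i + n) := by
    rw [part1, append_assoc, drop_append,
      drop_eq_nil_of_le (le_of_eq htakelen), htakelen, Nat.sub_self, drop_zero, nil_append]
  have part2 : p <+: (replL q p w).drop i := by
    rw [hLdropi]; exact ⟨w.drop (i + n), rfl⟩
  have part3 : ∀ j, p <+: (replL q p w).drop j → j ≤ i := by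
    intro j hj
    by_contra hcon
    push_neg at hcon
    rcases le_or_gt (i + n) j with hcase | hcase
    · rw [hLdrop_ge j hcase] at hj
      exact hw (infix_iff_exists_drop'.mpr ⟨j, hj⟩)
    · -- overlapping occurrence: border argument
      have hLdropj : (replL q p w).drop j = p.drop (j - i) ++ w.drop (i + n) := by
        rw [part1, append_assoc, drop_append,
          drop_eq_nil_of_le (show (w.take i).length ≤ j by rw [htakelen]; omega),
          nil_append, htakelen, drop_append]
        have hz : j - i - p.length = 0 := by rw [hplen]; omega
        rw [hz, drop_zero]
      rw [hLdropj] at hj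
      obtain ⟨t2, ht2⟩ := hj
      set x := p.drop (j - i) with hxdef
      have hxlen : x.length = n - (j - i) := by
        rw [hxdef, length_drop, hplen]
      have hz0 : x.length - p.length = 0 := by rw [hxlen, hplen]; omega
      have hxtake : p.take x.length = x := by
        have h := congrArg (List.take x.length) ht2
        rwa [take_append, hz0, take_zero, append_nil, take_left] at h
      have hxp : ProperBorder x p := by
        refine ⟨⟨?_, ?_, ?_⟩, ?_⟩
        · intro h
          rw [h] at hxlen
          simp only [length_nil] at hxlen
          omega
        · exact hxtake ▸ (p.take_prefix x.length)
        · exact hxdef ▸ p.drop_suffix (j - i)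
        · intro h
          have := congrArg List.length h
          rw [hxlen, hplen] at this
          omega
      have hxq : ProperBorder x q := (Set.ext_iff.mp hpb x).mp hxp
      have hx_eq : x = q.drop (j - i) := by
        have h := suffix_eq_drop' hxq.1.2.2
        rw [hxlen] at h
        rw [h]; congr 1; omega
      have hrest : p.drop x.length <+: w.drop (i + n) := by
        have h := congrArg (List.drop x.length) ht2
        rw [drop_append, hz0, drop_zero, drop_left] at h
        exact ⟨t2, h⟩
      have hsplit : x ++ p.drop x.length = p := by
        have h := take_append_drop x.length p
        rwa [hxtake] at h
      have hwdropj : w.drop j = x ++ w.drop (i + n) := by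
        have h1 : w.drop j = (w.drop i).drop (j - i) := by
          rw [drop_drop]; congr 1; omega
        rw [h1, hdropi, drop_append]
        have hz : j - i - q.length = 0 := by rw [← hn]; omega
        rw [hz, drop_zero, hx_eq]
      have hpw : p <+: w.drop j := by
        obtain ⟨t3, ht3⟩ := hrest
        refine ⟨t3, ?_⟩
        rw [hwdropj, ← hsplit, append_assoc, ht3]
      exact hw (infix_iff_exists_drop'.mpr ⟨j, hpw⟩)
  have part4 : replR p q (replL q p w) = w := by
    rw [replR_eq' q hp0 _ i part2 part3]
    have hth : (replL q p w).take i = w.take i := by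
      rw [part1, append_assoc, take_append, take_take, Nat.min_self,
        htakelen, Nat.sub_self, take_zero, append_nil]
    have hpl : i + p.length = i + n := by rw [hplen]
    rw [hpl, hth, hLdrop_ge (i + n) le_rfl, append_assoc, ← hdropi, take_append_drop]
  exact ⟨part1, part2, part3, part4⟩
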